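/- Let Q(x) be a monic polynomial of degree d+1 over a field of characteristic zero having d+1 distinct roots. Then the sum over the roots α of Q of α^d / Q'(α) equals 1. -/

import Mathlib

open Polynomial

/-- Let `Q(x)` be a monic polynomial of degree `d+1` over a field of characteristic zero
having `d+1` distinct roots.  Then the sum over the roots `α` of `Q` of `α^d / Q'(α)`
equals `1`. -/
theorem sum_pow_div_derivative_eval_eq_one {K : Type*} [Field K] [CharZero K] [DecidableEq K]
    (d : ℕ) (Q : K[X]) (hQ : Q.Monic) (hdeg : Q.natDegree = d + 1)
    (hroots : Q.roots.toFinset.card = d + 1) :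
    ∑ α ∈ Q.roots.toFinset, α ^ d / (Polynomial.derivative Q).eval α = 1 := by
  classical
  set s : Finset K := Q.roots.toFinset with hs
  have hcard : Multiset.card Q.roots = d + 1 :=
    le_antisymm (hdeg ▸ Q.card_roots') (hroots ▸ Multiset.toFinset_card_le _)
  have hnodup : Q.roots.Nodup :=
    Multiset.toFinset_card_eq_card_iff_nodup.mp (by rw [hroots, hcard])
  -- Q is the nodal polynomial on its root set
  have hQeq : Q = Lagrange.nodal s id := by
    have h1 : Q = (Q.roots.map fun a => X - C a).prod :=
      (prod_multiset_X_sub_C_of_monic_of_roots_card_eq hQ (hcard.trans hdeg.symm)).symm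
    rw [h1, Lagrange.nodal_eq, Finset.prod, hs]
    congr 1
    rw [Multiset.toFinset_val, Multiset.dedup_eq_self.mpr hnodup]
    simp
  have hscard : s.card = d + 1 := hroots
  have hinj : Set.InjOn (id : K → K) s := Function.injective_id.injOn
  -- rewrite each summand using nodal weights
  have hterm : ∀ α ∈ s, α ^ d / (Polynomial.derivative Q).eval α
      = α ^ d * Lagrange.nodalWeight s id α := by
    intro α hα
    rw [hQeq, div_eq_mul_inv, Lagrange.nodalWeight_eq_eval_derivative_nodal hα, id]
  rw [Finset.sum_congr rfl hterm]
  -- interpolate X^d on s gives X^d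
  have hinterp : (X ^ d : K[X]) = Lagrange.interpolate s id fun i => (X ^ d : K[X]).eval (id i) :=
    Lagrange.eq_interpolate (f := X ^ d) hinj (by
      rw [degree_X_pow, hscard]; exact_mod_cast Nat.lt_succ_self d)
  have hcoeff := congrArg (fun p : K[X] => p.coeff d) hinterp
  simp only [Lagrange.interpolate_apply, finset_sum_coeff, coeff_X_pow, if_pos rfl, if_true, id] at hcoeff
  rw [hcoeff]
  refine Finset.sum_congr rfl fun α hα => ?_
  have hb : Lagrange.basis s id α = C (Lagrange.nodalWeight s id α) *
      Lagrange.nodal (s.erase α) id := by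
    rw [Lagrange.basis_eq_prod_sub_inv_mul_nodal_div hα, Lagrange.nodal_erase_eq_nodal_div hα]
  have hmon : (Lagrange.nodal (s.erase α) (id : K → K)).Monic := Lagrange.nodal_monic
  have hnd : (Lagrange.nodal (s.erase α) (id : K → K)).natDegree = d := by
    rw [Lagrange.natDegree_nodal, Finset.card_erase_of_mem hα, hscard]; omega
  have hc1 : (Lagrange.nodal (s.erase α) (id : K → K)).coeff d = 1 := by
    rw [← hnd]; exact hmon.coeff_natDegree
  rw [hb]
  simp only [coeff_C_mul, hc1, eval_pow, eval_X, mul_one]
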